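/- Finite-blocklength achievability bound for lossless source coding: let X^n = (X_1,…,X_n) be drawn i.i.d. from a pmf P_X on a finite alphabet 𝒳. For every n, M ∈ ℕ there exists an (n,M)-code (f,φ) whose error probability satisfies P_{e,n} ≤ Pr{ ∑_{i=1}^n ı(X_i|P_X) ≥ log M }. -/

import Mathlib

/-!
Finite-blocklength achievability bound for lossless source coding
(Han's information-spectrum bound, Theorem `ach:lossless`).
-/

open scoped BigOperators

noncomputable section

/-- i.i.d. product pmf on length-`n` strings. -/
def iidP {α : Type*} [Fintype α] (p : α → ℝ) (n : ℕ) : (Fin n → α) → ℝ :=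
  fun xs => ∏ i, p (xs i)

/-- Probability of an event under a pmf on a finite space. -/
def Pr {Ω : Type*} [Fintype Ω] (μ : Ω → ℝ) (A : Set Ω) : ℝ :=
  ∑ ω, A.indicator μ ω

/-- Entropy density `ı(x|P) = −log P(x)`. -/
def entDensity {α : Type*} (p : α → ℝ) (x : α) : ℝ := -Real.log (p x)

/-- **Achievability bound for lossless source coding.**
For any source pmf `P` on a finite alphabet, any blocklength `n` and any number of
codewords `M ≥ 1`, there exists an `(n,M)`-code `(f,φ)` whose error probability is at most
`Pr{∑ᵢ ı(Xᵢ|P) ≥ log M}`. -/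
theorem lossless_achievability
    {𝒳 : Type} [Fintype 𝒳] (P : 𝒳 → ℝ)
    (hP0 : ∀ x, 0 ≤ P x) (hP1 : ∑ x, P x = 1)
    (n M : ℕ) (hM : 0 < M) :
    ∃ (f : (Fin n → 𝒳) → Fin M) (φ : Fin M → (Fin n → 𝒳)),
      Pr (iidP P n) {xs | φ (f xs) ≠ xs} ≤
        Pr (iidP P n) {xs | Real.log M ≤ ∑ i, entDensity P (xs i)} := by
  classical
  have hX : Nonempty 𝒳 := by
    by_contra h
    rw [not_nonempty_iff] at h
    simp [Finset.univ_eq_empty] at hP1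
  have hμ0 : ∀ xs : Fin n → 𝒳, 0 ≤ iidP P n xs := fun xs =>
    Finset.prod_nonneg (fun i _ => hP0 _)
  have hμsum : ∑ xs : Fin n → 𝒳, iidP P n xs = 1 := by
    have h1 : (∏ i : Fin n, ∑ x : 𝒳, P x)
        = ∑ xs ∈ Fintype.piFinset (fun _ : Fin n => (Finset.univ : Finset 𝒳)),
            ∏ i, P (xs i) := Finset.prod_univ_sum _ _
    rw [Fintype.piFinset_univ] at h1
    simp only [iidP]
    rw [← h1, hP1, Finset.prod_const, one_pow]
  set T : Finset (Fin n → 𝒳) :=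
    Finset.univ.filter (fun xs => 1 / (M : ℝ) < iidP P n xs) with hTdef
  have hMpos : (0 : ℝ) < M := by exact_mod_cast hM
  have hTcard : T.card < M := by
    rcases T.eq_empty_or_nonempty with he | hne
    · simp [he, hM]
    · have h1 : ∑ xs ∈ T, (1 / (M : ℝ)) < ∑ xs ∈ T, iidP P n xs := by
        apply Finset.sum_lt_sum_of_nonempty hne
        intro xs hx
        exact (Finset.mem_filter.mp hx).2
      have h2 : ∑ xs ∈ T, iidP P n xs ≤ 1 := by
        rw [← hμsum]
        exact Finset.sum_le_sum_of_subset_of_nonneg (Finset.subset_univ T)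
          (fun xs _ _ => hμ0 xs)
      rw [Finset.sum_const, nsmul_eq_mul] at h1
      have h3 : (T.card : ℝ) * (1 / M) < 1 := lt_of_lt_of_le h1 h2
      rw [mul_one_div, div_lt_one hMpos] at h3
      exact_mod_cast h3
  have hemb : Nonempty (↥T ↪ Fin M) := by
    apply Function.Embedding.nonempty_of_card_le
    rw [Fintype.card_coe, Fintype.card_fin]
    exact hTcard.le
  obtain ⟨e⟩ := hemb
  have hXn : Nonempty (Fin n → 𝒳) := ⟨fun _ => Classical.arbitrary 𝒳⟩
  set f : (Fin n → 𝒳) → Fin M :=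
    fun xs => if h : xs ∈ T then e ⟨xs, h⟩ else ⟨0, hM⟩ with hf
  set φ : Fin M → (Fin n → 𝒳) :=
    fun m => if h : ∃ t : ↥T, e t = m then (h.choose : Fin n → 𝒳)
      else Classical.arbitrary _ with hφ
  have hcorrect : ∀ xs ∈ T, φ (f xs) = xs := by
    intro xs hx
    have hfx : f xs = e ⟨xs, hx⟩ := by simp [hf, hx]
    have hex : ∃ t : ↥T, e t = f xs := ⟨⟨xs, hx⟩, hfx.symm⟩
    have : φ (f xs) = (hex.choose : Fin n → 𝒳) := by
      simp only [hφ]; rw [dif_pos hex]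
    rw [this]
    have h2 : hex.choose = ⟨xs, hx⟩ := e.injective (by rw [hex.choose_spec, hfx])
    rw [h2]
  refine ⟨f, φ, ?_⟩
  unfold Pr
  apply Finset.sum_le_sum
  intro xs _
  by_cases hA : φ (f xs) ≠ xs
  · rw [Set.indicator_of_mem (by exact hA : xs ∈ {xs | φ (f xs) ≠ xs})]
    by_cases h0 : iidP P n xs = 0
    · rw [h0]
      exact Set.indicator_nonneg (fun y _ => hμ0 y) xs
    · have hpos : 0 < iidP P n xs := lt_of_le_of_ne (hμ0 xs) (Ne.symm h0)
      have hxT : xs ∉ T := fun h => hA (hcorrect xs h)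
      have hle : iidP P n xs ≤ 1 / (M : ℝ) := by
        by_contra hlt
        exact hxT (Finset.mem_filter.mpr ⟨Finset.mem_univ _, lt_of_not_ge hlt⟩)
      have hfac : ∀ i : Fin n, P (xs i) ≠ 0 := by
        intro i hi
        exact h0 (Finset.prod_eq_zero (Finset.mem_univ i) hi)
      have hsum : ∑ i, entDensity P (xs i) = -Real.log (iidP P n xs) := by
        simp only [entDensity, iidP]
        rw [Real.log_prod (fun i _ => hfac i), Finset.sum_neg_distrib]
      have hlog : Real.log (iidP P n xs) ≤ -Real.log M := by
        have := Real.log_le_log hpos hle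
        rwa [one_div, Real.log_inv] at this
      have hmem : xs ∈ {xs | Real.log M ≤ ∑ i, entDensity P (xs i)} := by
        rw [Set.mem_setOf_eq, hsum]
        linarith
      rw [Set.indicator_of_mem hmem]
  · rw [Set.indicator_of_notMem (by exact hA : xs ∉ {xs | φ (f xs) ≠ xs})]
    exact Set.indicator_nonneg (fun y _ => hμ0 y) xs


end
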